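/- Let δ ∈ (0,1) and let (p_t)_{t≥0} be an adapted sequence of random variables with values in (0,1], with p_0 = p⁰ > 0 deterministic. Suppose that for each t, E[log p_{t+1} − log p_t | F_t] ≥ D_t − ε, where D_t ≥ 0 is F_t-measurable and ε ≥ 0. Then (1−δ) Σ_{t=0}^∞ δ^t E[D_t] ≤ −(1−δ) log p⁰ + ε. -/
import Mathlib


open MeasureTheory Filter

theorem stmt_11 {Ω : Type*} {m0 : MeasurableSpace Ω}
    (μ : Measure Ω) [IsProbabilityMeasure μ]
    (ℱ : Filtration ℕ m0)
    (δ : ℝ) (hδ : δ ∈ Set.Ioo (0 : ℝ) 1)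
    (p : ℕ → Ω → ℝ)
    (hpadp : ∀ t, StronglyMeasurable[ℱ t] (p t))
    (hpmem : ∀ t ω, p t ω ∈ Set.Ioc (0 : ℝ) 1)
    (p0 : ℝ) (hp0 : 0 < p0) (hp0det : ∀ ω, p 0 ω = p0)
    (hlogint : ∀ t, Integrable (fun ω => Real.log (p t ω)) μ)
    (D : ℕ → Ω → ℝ)
    (hDadp : ∀ t, StronglyMeasurable[ℱ t] (D t))
    (hDnn : ∀ t ω, 0 ≤ D t ω)
    (hDint : ∀ t, Integrable (D t) μ)
    (ε : ℝ) (hε : 0 ≤ ε)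
    (hstep : ∀ t, ∀ᵐ ω ∂μ,
      D t ω - ε ≤
        (μ[fun ω' => Real.log (p (t + 1) ω') - Real.log (p t ω') | ℱ t]) ω) :
    (1 - δ) * ∑' t : ℕ, δ ^ t * ∫ ω, D t ω ∂μ
      ≤ -(1 - δ) * Real.log p0 + ε := by
  obtain ⟨hδ0, hδ1⟩ := hδ
  set a : ℕ → ℝ := fun t => ∫ ω, Real.log (p t ω) ∂μ with ha
  have hanp : ∀ t, a t ≤ 0 := fun t =>
    integral_nonpos (fun ω => Real.log_nonpos (le_of_lt (hpmem t ω).1) (hpmem t ω).2)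
  have ha0 : a 0 = Real.log p0 := by
    simp only [ha, hp0det]
    simp
  have hkey : ∀ t, (∫ ω, D t ω ∂μ) - ε ≤ a (t + 1) - a t := by
    intro t
    have h1 : ∫ ω, (D t ω - ε) ∂μ ≤
        ∫ ω, (μ[fun ω' => Real.log (p (t + 1) ω') - Real.log (p t ω') | ℱ t]) ω ∂μ :=
      integral_mono_ae ((hDint t).sub (integrable_const ε)) integrable_condExp (hstep t)
    rw [integral_condExp (ℱ.le t), integral_sub (hlogint (t + 1)) (hlogint t)] at h1
    rw [integral_sub (hDint t) (integrable_const ε), integral_const] at h1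
    simpa using h1
  -- Abel/induction bound
  have htel : ∀ n, ∑ t ∈ Finset.range n, δ ^ t * (a (t + 1) - a t) ≤ δ ^ n * a n - a 0 := by
    intro n
    induction n with
    | zero => simp
    | succ n ih =>
      rw [Finset.sum_range_succ]
      have h2 : δ ^ n * a (n + 1) ≤ δ ^ (n + 1) * a (n + 1) := by
        apply mul_le_mul_of_nonpos_right _ (hanp (n + 1))
        exact pow_le_pow_of_le_one (le_of_lt hδ0) (le_of_lt hδ1) (Nat.le_succ n)
      nlinarith [ih]
  have hInn : ∀ t, 0 ≤ ∫ ω, D t ω ∂μ := fun t => integral_nonneg (fun ω => hDnn t ω)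
  have hsum : ∀ n, ∑ t ∈ Finset.range n, (1 - δ) * (δ ^ t * ∫ ω, D t ω ∂μ)
      ≤ -(1 - δ) * Real.log p0 + ε := by
    intro n
    have h3 : ∑ t ∈ Finset.range n, (1 - δ) * (δ ^ t * ∫ ω, D t ω ∂μ)
        ≤ ∑ t ∈ Finset.range n, (1 - δ) * (δ ^ t * (a (t + 1) - a t + ε)) := by
      apply Finset.sum_le_sum
      intro t _
      have h := hkey t
      have hδp : (0:ℝ) ≤ δ ^ t := le_of_lt (pow_pos hδ0 t)
      have h' : ∫ ω, D t ω ∂μ ≤ a (t + 1) - a t + ε := by linarith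
      exact mul_le_mul_of_nonneg_left (mul_le_mul_of_nonneg_left h' hδp) (by linarith)
    have h4 : ∑ t ∈ Finset.range n, (1 - δ) * (δ ^ t * (a (t + 1) - a t + ε))
        = (1 - δ) * (∑ t ∈ Finset.range n, δ ^ t * (a (t + 1) - a t))
          + ε * ((1 - δ) * ∑ t ∈ Finset.range n, δ ^ t) := by
      simp only [Finset.mul_sum, ← Finset.sum_add_distrib]
      exact Finset.sum_congr rfl (fun t _ => by ring)
    have hgeo : (1 - δ) * ∑ t ∈ Finset.range n, δ ^ t ≤ 1 := by
      rw [geom_sum_eq (ne_of_lt hδ1)]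
      have hp : (0:ℝ) ≤ δ ^ n := le_of_lt (pow_pos hδ0 n)
      have hne : δ - 1 ≠ 0 := by intro h'; linarith
      rw [show (1 - δ) * ((δ ^ n - 1) / (δ - 1)) = 1 - δ ^ n by field_simp; ring]
      linarith
    have h6 : (1 - δ) * (∑ t ∈ Finset.range n, δ ^ t * (a (t + 1) - a t))
        ≤ (1 - δ) * (δ ^ n * a n - a 0) :=
      mul_le_mul_of_nonneg_left (htel n) (by linarith)
    have h7 : (1 - δ) * (δ ^ n * a n - a 0) ≤ -(1 - δ) * Real.log p0 := by
      rw [← ha0]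
      have : δ ^ n * a n ≤ 0 :=
        mul_nonpos_of_nonneg_of_nonpos (le_of_lt (pow_pos hδ0 n)) (hanp n)
      nlinarith
    have h8 : ε * ((1 - δ) * ∑ t ∈ Finset.range n, δ ^ t) ≤ ε :=
      le_trans (mul_le_mul_of_nonneg_left hgeo hε) (by linarith)
    linarith [h3, h6, h7, h8, h4.le]
  have := Real.tsum_le_of_sum_range_le
    (f := fun t => (1 - δ) * (δ ^ t * ∫ ω, D t ω ∂μ))
    (c := -(1 - δ) * Real.log p0 + ε)
    (fun t => mul_nonneg (by linarith) (mul_nonneg (le_of_lt (pow_pos hδ0 t)) (hInn t)))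
    hsum
  rwa [tsum_mul_left] at this
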